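/- (Counting step of Appendix Theorem 1) Let p ≥ 1 and let α, β be positive irrationals with 1/α + 1/β = p, M = ⌊1/α⌋ + 1, N = ⌊1/β⌋ + 1. Then for every positive integer k, #{n ≥ M : ⌊nα⌋ < k} + #{n ≥ N : ⌊nβ⌋ < k} = kp - M - N + 1. -/

import Mathlib

lemma count_aux (γ : ℝ) (hγ : 0 < γ) (hirr : Irrational γ) (M : ℕ)
    (hM : (M : ℤ) = ⌊1/γ⌋ + 1) (k : ℕ) (hk : 1 ≤ k) :
    (Set.ncard {n : ℕ | M ≤ n ∧ ⌊(n : ℝ) * γ⌋ < (k : ℤ)} : ℤ) = ⌊(k:ℝ)/γ⌋ - M + 1 := by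
  have hkγirr : Irrational ((k:ℝ)/γ) := by
    have h1 : Irrational γ⁻¹ := hirr.inv
    have := h1.natCast_mul (by omega : k ≠ 0)
    simpa [div_eq_mul_inv] using this
  have hfl0 : (0:ℤ) ≤ ⌊(1:ℝ)/γ⌋ := Int.floor_nonneg.mpr (by positivity)
  have hmono : ⌊(1:ℝ)/γ⌋ ≤ ⌊(k:ℝ)/γ⌋ := by
    apply Int.floor_le_floor
    gcongr
    exact_mod_cast hk
  set m : ℕ := (⌊(k:ℝ)/γ⌋).toNat with hm
  have hmz : (m : ℤ) = ⌊(k:ℝ)/γ⌋ := Int.toNat_of_nonneg (le_trans hfl0 hmono)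
  have hseteq : {n : ℕ | M ≤ n ∧ ⌊(n : ℝ) * γ⌋ < (k : ℤ)} = ↑(Finset.Icc M m) := by
    ext n
    simp only [Set.mem_setOf_eq, Finset.coe_Icc, Set.mem_Icc]
    constructor
    · rintro ⟨h1, h2⟩
      refine ⟨h1, ?_⟩
      rw [Int.floor_lt] at h2
      have : (n:ℝ) < (k:ℝ)/γ := (lt_div_iff₀ hγ).mpr (by exact_mod_cast h2)
      have : (n:ℤ) ≤ ⌊(k:ℝ)/γ⌋ := Int.le_floor.mpr (by exact_mod_cast this.le)
      omega
    · rintro ⟨h1, h2⟩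
      refine ⟨h1, ?_⟩
      rw [Int.floor_lt]
      rw [← lt_div_iff₀ hγ]
      have h3 : ((n:ℤ):ℝ) ≤ (k:ℝ)/γ := Int.le_floor.mp (by omega)
      have h4 : ((n:ℤ):ℝ) ≠ (k:ℝ)/γ := fun h => hkγirr ⟨(n:ℤ), h⟩
      push_cast at h3 h4 ⊢
      exact lt_of_le_of_ne h3 h4
  rw [hseteq, Set.ncard_coe_finset, Nat.card_Icc]
  have hMm : M ≤ m + 1 := by omega
  push_cast [Nat.cast_sub hMm]
  omega

theorem stmt_16 (p : ℕ) (hp : 1 ≤ p) (α β : ℝ) (hα : 0 < α) (hβ : 0 < β)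
    (hαirr : Irrational α) (hβirr : Irrational β)
    (hsum : 1/α + 1/β = p)
    (M N : ℕ) (hM : (M : ℤ) = ⌊1/α⌋ + 1) (hN : (N : ℤ) = ⌊1/β⌋ + 1) :
    ∀ k : ℕ, 1 ≤ k →
      (Set.ncard {n : ℕ | M ≤ n ∧ ⌊(n : ℝ) * α⌋ < (k : ℤ)} : ℤ) +
      (Set.ncard {n : ℕ | N ≤ n ∧ ⌊(n : ℝ) * β⌋ < (k : ℤ)} : ℤ) =
      k * p - M - N + 1 := by
  intro k hk
  rw [count_aux α hα hαirr M hM k hk, count_aux β hβ hβirr N hN k hk]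
  have hxy : (k:ℝ)/α + (k:ℝ)/β = (k:ℝ)*(p:ℝ) := by
    field_simp
    field_simp at hsum
    nlinarith [hsum]
  have hfloorsum : ⌊(k:ℝ)/α⌋ + ⌊(k:ℝ)/β⌋ = (k:ℤ)*(p:ℤ) - 1 := by
    have hxirr : Irrational ((k:ℝ)/α) := by
      simpa [div_eq_mul_inv] using hαirr.inv.natCast_mul (by omega : k ≠ 0)
    have hyirr : Irrational ((k:ℝ)/β) := by
      simpa [div_eq_mul_inv] using hβirr.inv.natCast_mul (by omega : k ≠ 0)
    set s : ℤ := (k:ℤ)*(p:ℤ) - ⌊(k:ℝ)/α⌋ - ⌊(k:ℝ)/β⌋ with hs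
    have hsr : (s:ℝ) = Int.fract ((k:ℝ)/α) + Int.fract ((k:ℝ)/β) := by
      simp only [Int.fract]
      push_cast [hs]
      linarith [hxy]
    have h1 : (0:ℝ) < (s:ℝ) := by
      rw [hsr]
      have hne : (k:ℝ)/α ≠ ⌊(k:ℝ)/α⌋ := fun h => hxirr ⟨⌊(k:ℝ)/α⌋, h.symm⟩
      have := (Int.fract_pos).mpr hne
      have := Int.fract_nonneg ((k:ℝ)/β)
      linarith
    have h2 : (s:ℝ) < 2 := by
      rw [hsr]
      linarith [Int.fract_lt_one ((k:ℝ)/α), Int.fract_lt_one ((k:ℝ)/β)]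
    have h1' : (0:ℤ) < s := by exact_mod_cast h1
    have h2' : s < 2 := by exact_mod_cast h2
    have : s = 1 := by omega
    omega
  omega
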